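/- (v-adic valuation estimate for restricted power sums; Proposition on ord_v of S̃_i(t), case of integer exponents.) Let f ∈ A be nonzero with deg f < d, and let i ≥ 0, m ≥ 0 be integers. Put P := Σ_{n ∈ A₊, deg n = i, n ≡ f mod v} n^m ∈ A. Then v^N divides P, where N := max(0, (q−1)·Σ_{j=1}^{⌊i/d⌋} (i − jd − 1)), the inner sum being taken in ℤ. In particular the v-adic valuation of the sum of m-th powers of monic polynomials of degree i congruent to f mod v grows quadratically in i. -/

import Mathlib

open Polynomial

/-- The power sum `S_i(-m)`: the sum of `n ^ m` over monic polynomials `n` of degree `i`. -/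
noncomputable def powerSum (F : Type*) [Field F] [Fintype F] (i m : ℕ) : Polynomial F :=
  ∑ᶠ n ∈ {n : Polynomial F | n.Monic ∧ n.natDegree = i}, n ^ m

/-- The restricted power sum `S̃_i(-m)`: the sum of `n ^ m` over monic polynomials `n` of
degree `i` not divisible by `v`. -/
noncomputable def powerSumV (F : Type*) [Field F] [Fintype F] (v : Polynomial F) (i m : ℕ) :
    Polynomial F :=
  ∑ᶠ n ∈ {n : Polynomial F | n.Monic ∧ n.natDegree = i ∧ ¬ v ∣ n}, n ^ m

/-- `ζ_∞(-m_1, …, -m_r)`, the ∞-adic multiple zeta value at nonpositive integers: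
the sum over `i_1 > ⋯ > i_r ≥ 0` of `S_{i_1}(-m_1) ⋯ S_{i_r}(-m_r)`.
Only `m 0, …, m (r-1)` are used.  The depth-0 value is `1`. -/
noncomputable def zetaInf (F : Type*) [Field F] [Fintype F] (r : ℕ) (m : ℕ → ℕ) :
    Polynomial F :=
  ∑ᶠ i ∈ {i : Fin r → ℕ | StrictAnti i}, ∏ j : Fin r, powerSum F (i j) (m (j : ℕ))

/-- `ζ⋆_∞(-m_1, …, -m_r)`, the ∞-adic multiple zeta star value at nonpositive integers:
the sum over `i_1 ≥ ⋯ ≥ i_r ≥ 0` of `S_{i_1}(-m_1) ⋯ S_{i_r}(-m_r)`. -/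
noncomputable def zetaInfStar (F : Type*) [Field F] [Fintype F] (r : ℕ) (m : ℕ → ℕ) :
    Polynomial F :=
  ∑ᶠ i ∈ {i : Fin r → ℕ | Antitone i}, ∏ j : Fin r, powerSum F (i j) (m (j : ℕ))

/-- `ζ_v(-m_1, …, -m_r)`, the v-adic multiple zeta value at nonpositive integers. -/
noncomputable def zetaV (F : Type*) [Field F] [Fintype F] (v : Polynomial F) (r : ℕ)
    (m : ℕ → ℕ) : Polynomial F :=
  ∑ᶠ i ∈ {i : Fin r → ℕ | StrictAnti i}, ∏ j : Fin r, powerSumV F v (i j) (m (j : ℕ))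

/-- `ζ⋆_v(-m_1, …, -m_r)`, the v-adic multiple zeta star value at nonpositive integers. -/
noncomputable def zetaVStar (F : Type*) [Field F] [Fintype F] (v : Polynomial F) (r : ℕ)
    (m : ℕ → ℕ) : Polynomial F :=
  ∑ᶠ i ∈ {i : Fin r → ℕ | Antitone i}, ∏ j : Fin r, powerSumV F v (i j) (m (j : ℕ))

/-- `ζ_{<d}(-m_1, …, -m_r)`, the truncated multiple zeta value:
the sum over `d > i_1 > ⋯ > i_r ≥ 0` of `S_{i_1}(-m_1) ⋯ S_{i_r}(-m_r)`. -/
noncomputable def zetaLt (F : Type*) [Field F] [Fintype F] (d r : ℕ) (m : ℕ → ℕ) :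
    Polynomial F :=
  ∑ᶠ i ∈ {i : Fin r → ℕ | StrictAnti i ∧ ∀ j, i j < d},
    ∏ j : Fin r, powerSum F (i j) (m (j : ℕ))

/-- `ζ⋆_{<d}(-m_1, …, -m_r)`, the truncated multiple zeta star value. -/
noncomputable def zetaLtStar (F : Type*) [Field F] [Fintype F] (d r : ℕ) (m : ℕ → ℕ) :
    Polynomial F :=
  ∑ᶠ i ∈ {i : Fin r → ℕ | Antitone i ∧ ∀ j, i j < d},
    ∏ j : Fin r, powerSum F (i j) (m (j : ℕ))

/-- `ζ_{<d}(-m)`, the depth-one truncated zeta value `Σ_{d > i ≥ 0} S_i(-m)`. -/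
noncomputable def zetaLtOne (F : Type*) [Field F] [Fintype F] (d m : ℕ) : Polynomial F :=
  ∑ᶠ i ∈ {i : ℕ | i < d}, powerSum F i m


section Aux

variable {F : Type*} [Field F] [Fintype F]

lemma finite_deg_le (i : ℕ) : {n : Polynomial F | n.natDegree ≤ i}.Finite := by
  apply Set.Finite.of_finite_image (f := fun n : Polynomial F => fun j : Fin (i + 1) => n.coeff j)
    (Set.toFinite _)
  intro a ha b hb h
  ext j
  by_cases hj : j ≤ i
  · simpa using congrFun h ⟨j, Nat.lt_succ_of_le hj⟩
  · rw [Polynomial.coeff_eq_zero_of_natDegree_lt (lt_of_le_of_lt ha (by omega)),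
      Polynomial.coeff_eq_zero_of_natDegree_lt (lt_of_le_of_lt hb (by omega))]

lemma finite_M (i : ℕ) : {n : Polynomial F | n.Monic ∧ n.natDegree = i}.Finite :=
  (finite_deg_le i).subset fun n hn => le_of_eq hn.2

lemma finite_Q (v f : Polynomial F) (i : ℕ) :
    {n : Polynomial F | n.Monic ∧ n.natDegree = i ∧ v ∣ n - f}.Finite :=
  (finite_deg_le i).subset fun n hn => le_of_eq hn.2.1

lemma powerSum_eq (i k : ℕ) :
    powerSum F i k = ∑ n ∈ (finite_M (F := F) i).toFinset, n ^ k :=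
  finsum_mem_eq_finite_toFinset_sum _ _

lemma M_succ_image [DecidableEq (Polynomial F)] (e : ℕ) :
    (finite_M (F := F) (e + 1)).toFinset
      = Finset.image (fun p : Polynomial F × F => X * p.1 + C p.2)
          ((finite_M (F := F) e).toFinset ×ˢ Finset.univ) := by
  classical
  ext n
  simp only [Set.Finite.mem_toFinset, Set.mem_setOf_eq, Finset.mem_image, Finset.mem_product,
    Finset.mem_univ, and_true]
  constructor
  · rintro ⟨hmon, hdeg⟩
    have h1 : n.divX.natDegree = e := by
      rw [natDegree_divX_eq_natDegree_tsub_one, hdeg]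
      omega
    have h2 : n.divX.Monic := by
      have : n.divX.coeff e = 1 := by
        rw [coeff_divX]
        simpa [hdeg] using hmon.coeff_natDegree
      rwa [Monic, leadingCoeff, h1]
    exact ⟨(n.divX, n.coeff 0), ⟨h2, h1⟩, X_mul_divX_add n⟩
  · rintro ⟨⟨h, c⟩, ⟨hmon, hdeg⟩, rfl⟩
    have hmX : (X * h).Monic := monic_X.mul hmon
    have hdX : (X * h).natDegree = e + 1 := by
      rw [natDegree_mul X_ne_zero hmon.ne_zero, natDegree_X, hdeg, add_comm]
    have hlt : (C c).degree < (X * h).degree := by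
      refine lt_of_le_of_lt degree_C_le ?_
      rw [degree_eq_natDegree hmX.ne_zero, hdX]
      exact_mod_cast Nat.succ_pos e
    refine ⟨hmX.add_of_left hlt, ?_⟩
    have : (X * h + C c).degree = ((e + 1 : ℕ) : WithBot ℕ) := by
      rw [degree_add_eq_left_of_degree_lt hlt, degree_eq_natDegree hmX.ne_zero, hdX]
    exact natDegree_eq_of_degree_eq_some this

lemma powerSum_vanish : ∀ e k : ℕ, k < (Fintype.card F - 1) * e → powerSum F e k = 0 := by
  intro e
  induction e with
  | zero => intro k hk; simp at hk
  | succ e ih =>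
    intro k hk
    classical
    rw [powerSum_eq, M_succ_image, Finset.sum_image (by
      rintro ⟨a, c⟩ _ ⟨b, c'⟩ _ h
      have hc : c = c' := by
        have := congrArg (fun r : Polynomial F => r.coeff 0) h
        simpa [mul_coeff_zero] using this
      subst hc
      have : X * a = X * b := by
        have := h
        simpa using add_right_cancel this
      exact Prod.ext (mul_left_cancel₀ X_ne_zero this) rfl), Finset.sum_product]
    have hstep : ∀ h : Polynomial F, ∑ c : F, (X * h + C c) ^ k
        = ∑ a ∈ Finset.range (k + 1),
            (X * h) ^ a * C (∑ c : F, c ^ (k - a)) * (k.choose a : Polynomial F) := by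
      intro h
      simp_rw [add_pow]
      rw [Finset.sum_comm]
      refine Finset.sum_congr rfl fun a _ => ?_
      rw [map_sum]
      simp_rw [map_pow]
      rw [Finset.mul_sum, Finset.sum_mul]
    simp_rw [hstep]
    rw [Finset.sum_comm]
    refine Finset.sum_eq_zero fun a ha => ?_
    by_cases hqa : k - a < Fintype.card F - 1
    · rw [FiniteField.sum_pow_lt_card_sub_one (K := F) (k - a) hqa]
      simp
    · push_neg at hqa
      have ha' : a ≤ k := by simpa using Nat.lt_succ_iff.mp (Finset.mem_range.mp ha)
      have hmul : (Fintype.card F - 1) * (e + 1) = (Fintype.card F - 1) * e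
          + (Fintype.card F - 1) := by ring
      have haz : a < (Fintype.card F - 1) * e := by omega
      have hps : ∑ h ∈ (finite_M (F := F) e).toFinset, h ^ a = 0 := by
        rw [← powerSum_eq]; exact ih a haz
      calc ∑ h ∈ (finite_M (F := F) e).toFinset,
            (X * h) ^ a * C (∑ c : F, c ^ (k - a)) * (k.choose a : Polynomial F)
          = (∑ h ∈ (finite_M (F := F) e).toFinset, h ^ a)
              * (X ^ a * C (∑ c : F, c ^ (k - a)) * (k.choose a : Polynomial F)) := by
            rw [Finset.sum_mul]
            refine Finset.sum_congr rfl fun h _ => ?_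
            rw [mul_pow]; ring
        _ = 0 := by rw [hps, zero_mul]

end Aux

def NN (q d i : ℕ) : ℕ :=
  (((q : ℤ) - 1) * ∑ j ∈ Finset.Icc 1 (i / d), ((i : ℤ) - (j : ℤ) * (d : ℤ) - 1)).toNat

lemma NN_zero (q d i : ℕ) (h : i < d) : NN q d i = 0 := by
  unfold NN
  rw [Nat.div_eq_of_lt h]
  simp

lemma NN_rec (q d i : ℕ) (hd : 0 < d) (hdi : d ≤ i) :
    ((q : ℤ) - 1) * ∑ j ∈ Finset.Icc 1 (i / d), ((i : ℤ) - (j : ℤ) * (d : ℤ) - 1)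
      = ((q : ℤ) - 1) * ((i : ℤ) - (d : ℤ) - 1)
        + ((q : ℤ) - 1) * ∑ j ∈ Finset.Icc 1 ((i - d) / d),
            (((i - d : ℕ) : ℤ) - (j : ℤ) * (d : ℤ) - 1) := by
  have hdiv : i / d = (i - d) / d + 1 := Nat.div_eq_sub_div hd hdi
  set E := (i - d) / d with hE
  have himg : Finset.Icc 1 (E + 1) = Finset.image (· + 1) (Finset.Icc 0 E) := by
    ext x
    simp only [Finset.mem_Icc, Finset.mem_image]
    constructor
    · intro hx; exact ⟨x - 1, by omega, by omega⟩
    · rintro ⟨y, hy, rfl⟩; omega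
  have hins : Finset.Icc 0 E = insert 0 (Finset.Icc 1 E) := by
    have : ∀ E' : ℕ, Finset.Icc 0 E' = insert 0 (Finset.Icc 1 E') := by
      intro E'; ext x; simp only [Finset.mem_Icc, Finset.mem_insert]; omega
    exact this E
  rw [hdiv, himg, Finset.sum_image (by intro a _ b _ h; simp only at h; omega), hins,
    Finset.sum_insert (by simp), mul_add]
  congr 2
  · push_cast; ring
  · refine Finset.sum_congr rfl fun j hj => ?_
    have : ((i - d : ℕ) : ℤ) = (i : ℤ) - (d : ℤ) := by
      push_cast [Nat.cast_sub hdi]; ring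
    rw [this]; push_cast; ring

lemma NN_le (q d i k : ℕ) (hq : 1 ≤ q) (hd : 0 < d) (hdi : d ≤ i)
    (hk : (q - 1) * (i - d) ≤ k) : NN q d i ≤ k + NN q d (i - d) := by
  unfold NN
  rw [Int.toNat_le, NN_rec q d i hd hdi]
  have h1 : (((q - 1) * (i - d) : ℕ) : ℤ) ≤ (k : ℤ) := by exact_mod_cast hk
  have h2 : (((q - 1) * (i - d) : ℕ) : ℤ) = ((q : ℤ) - 1) * ((i : ℤ) - (d : ℤ)) := by
    push_cast [Nat.cast_sub hdi, Nat.cast_sub hq]; ring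
  have h3 : ((q : ℤ) - 1) * ((i : ℤ) - (d : ℤ) - 1) ≤ ((q : ℤ) - 1) * ((i : ℤ) - (d : ℤ)) := by
    have h0 : (1 : ℤ) ≤ (q : ℤ) := by exact_mod_cast hq
    nlinarith
  have h4 : ((q : ℤ) - 1) * ∑ j ∈ Finset.Icc 1 ((i - d) / d),
      (((i - d : ℕ) : ℤ) - (j : ℤ) * (d : ℤ) - 1) ≤ (NN q d (i - d) : ℤ) := by
    unfold NN
    exact Int.self_le_toNat _
  push_cast
  omega

section Main

variable {F : Type*} [Field F] [Fintype F]

lemma Q_image [DecidableEq (Polynomial F)] (v f : Polynomial F) (hv : v.Monic)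
    {i : ℕ} (hdi : v.natDegree ≤ i) (hf : f.natDegree < v.natDegree) :
    (finite_Q v f i).toFinset
      = Finset.image (fun w => v * w + f) (finite_M (F := F) (i - v.natDegree)).toFinset := by
  have hd : 0 < v.natDegree := lt_of_le_of_lt (Nat.zero_le _) hf
  ext n
  simp only [Set.Finite.mem_toFinset, Set.mem_setOf_eq, Finset.mem_image]
  constructor
  · rintro ⟨hmon, hdeg, hdvd⟩
    obtain ⟨w, hw⟩ := hdvd
    have hfi : f.natDegree < n.natDegree := by omega
    have hnf : (n - f).Monic := by
      have : degree (-f) < degree n := by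
        rw [degree_neg]
        exact degree_lt_degree hfi
      simpa [sub_eq_add_neg] using hmon.add_of_left this
    have hnfdeg : (n - f).natDegree = i := by
      rw [natDegree_sub_eq_left_of_natDegree_lt hfi, hdeg]
    have hwm : w.Monic := hv.of_mul_monic_left (hw ▸ hnf)
    have hwdeg : w.natDegree = i - v.natDegree := by
      have : (v * w).natDegree = i := hw ▸ hnfdeg
      rw [natDegree_mul hv.ne_zero hwm.ne_zero] at this
      omega
    exact ⟨w, ⟨hwm, hwdeg⟩, by rw [← hw]; ring⟩
  · rintro ⟨w, ⟨hwm, hwdeg⟩, rfl⟩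
    have hvw : (v * w).Monic := hv.mul hwm
    have hvwdeg : (v * w).natDegree = i := by
      rw [natDegree_mul hv.ne_zero hwm.ne_zero]; omega
    have hlt : f.degree < (v * w).degree := by
      apply degree_lt_degree
      omega
    refine ⟨hvw.add_of_left hlt, ?_, by simp⟩
    have : (v * w + f).degree = ((i : ℕ) : WithBot ℕ) := by
      rw [degree_add_eq_left_of_degree_lt hlt, degree_eq_natDegree hvw.ne_zero, hvwdeg]
    exact natDegree_eq_of_degree_eq_some this

lemma finite_R (v : Polynomial F) : {g : Polynomial F | g.degree < v.degree}.Finite :=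
  (finite_deg_le v.natDegree).subset fun g hg =>
    Polynomial.natDegree_le_natDegree (le_of_lt hg)

lemma main_dvd (v : Polynomial F) (hv : v.Monic) (hd : 0 < v.natDegree) :
    ∀ i : ℕ,
      (∀ (m : ℕ) (f : Polynomial F), f.natDegree < v.natDegree →
          v ^ NN (Fintype.card F) v.natDegree i ∣
            ∑ᶠ n ∈ {n : Polynomial F | n.Monic ∧ n.natDegree = i ∧ v ∣ n - f}, n ^ m) ∧
      (∀ k : ℕ, v ^ NN (Fintype.card F) v.natDegree i ∣ powerSum F i k) := by
  classical
  intro i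
  induction i using Nat.strong_induction_on with
  | _ i IH =>
  have hq : 1 ≤ Fintype.card F := Fintype.card_pos
  have hR : ∀ (m : ℕ) (f : Polynomial F), f.natDegree < v.natDegree →
      v ^ NN (Fintype.card F) v.natDegree i ∣
        ∑ᶠ n ∈ {n : Polynomial F | n.Monic ∧ n.natDegree = i ∧ v ∣ n - f}, n ^ m := by
    intro m f hf
    by_cases hdi : i < v.natDegree
    · rw [NN_zero _ _ _ hdi, pow_zero]
      exact one_dvd _
    · push_neg at hdi
      rw [finsum_mem_eq_finite_toFinset_sum _ (finite_Q v f i),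
        Q_image v f hv hdi hf,
        Finset.sum_image (by
          intro a _ b _ h
          exact mul_left_cancel₀ hv.ne_zero (add_right_cancel h))]
      simp_rw [add_pow]
      rw [Finset.sum_comm]
      apply Finset.dvd_sum
      intro k _
      have hterm : ∑ w ∈ (finite_M (F := F) (i - v.natDegree)).toFinset,
            (v * w) ^ k * f ^ (m - k) * (m.choose k : Polynomial F)
          = powerSum F (i - v.natDegree) k
              * (v ^ k * (f ^ (m - k) * (m.choose k : Polynomial F))) := by
        rw [powerSum_eq, Finset.sum_mul]
        refine Finset.sum_congr rfl fun w _ => ?_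
        rw [mul_pow]; ring
      rw [hterm]
      by_cases hks : k < (Fintype.card F - 1) * (i - v.natDegree)
      · rw [powerSum_vanish _ _ hks, zero_mul]
        exact dvd_zero _
      · push_neg at hks
        have hle : NN (Fintype.card F) v.natDegree i
            ≤ k + NN (Fintype.card F) v.natDegree (i - v.natDegree) :=
          NN_le _ _ _ _ hq hd hdi hks
        calc v ^ NN (Fintype.card F) v.natDegree i
            ∣ v ^ (NN (Fintype.card F) v.natDegree (i - v.natDegree) + k) :=
              pow_dvd_pow _ (by omega)
          _ = v ^ NN (Fintype.card F) v.natDegree (i - v.natDegree) * v ^ k := pow_add _ _ _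
          _ ∣ powerSum F (i - v.natDegree) k
                * (v ^ k * (f ^ (m - k) * (m.choose k : Polynomial F))) :=
              mul_dvd_mul ((IH (i - v.natDegree) (by omega)).2 k) (dvd_mul_right _ _)
  refine ⟨hR, ?_⟩
  intro k
  rw [powerSum_eq]
  rw [← Finset.sum_fiberwise_of_maps_to (g := fun n => n %ₘ v)
    (t := (finite_R v).toFinset)
    (fun n _ => (finite_R v).mem_toFinset.mpr (degree_modByMonic_lt n hv)) (fun n => n ^ k)]
  apply Finset.dvd_sum
  intro g hg
  have hgdeg : g.degree < v.degree := (finite_R v).mem_toFinset.mp hg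
  have hgnat : g.natDegree < v.natDegree := by
    rcases eq_or_ne g 0 with rfl | hg0
    · simpa using hd
    · exact natDegree_lt_natDegree hg0 hgdeg
  have hfilter : Finset.filter (fun n => n %ₘ v = g) (finite_M (F := F) i).toFinset
      = (finite_Q v g i).toFinset := by
    ext n
    simp only [Finset.mem_filter, Set.Finite.mem_toFinset, Set.mem_setOf_eq]
    constructor
    · rintro ⟨⟨hmon, hdeg⟩, hmod⟩
      refine ⟨hmon, hdeg, ⟨n /ₘ v, ?_⟩⟩
      rw [← hmod]
      linear_combination -modByMonic_add_div n v
    · rintro ⟨hmon, hdeg, hdvd⟩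
      refine ⟨⟨hmon, hdeg⟩, ?_⟩
      have heq : n %ₘ v - g = (n - g) - v * (n /ₘ v) := by
        linear_combination modByMonic_add_div n v
      have hdvd2 : v ∣ n %ₘ v - g := by
        rw [heq]
        exact dvd_sub hdvd (Dvd.intro _ rfl)
      have hdeglt : (n %ₘ v - g).degree < v.degree :=
        lt_of_le_of_lt (degree_sub_le _ _) (max_lt (degree_modByMonic_lt n hv) hgdeg)
      have := Polynomial.eq_zero_of_dvd_of_degree_lt hdvd2 hdeglt
      exact sub_eq_zero.mp this
  rw [hfilter, ← finsum_mem_eq_finite_toFinset_sum _ (finite_Q v g i)]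
  exact hR k g hgnat

end Main

/-- v-adic valuation estimate for restricted power sums (integer exponents): for nonzero
`f ∈ A` with `deg f < d`, the sum `P = Σ_{n ∈ A₊, deg n = i, n ≡ f mod v} n^m` is
divisible by `v^N`, where `N = max(0, (q-1)·Σ_{j=1}^{⌊i/d⌋} (i - jd - 1))`, the inner
sum being taken in `ℤ`. -/
theorem ord_v_powerSum (F : Type*) [Field F] [Fintype F] (v : Polynomial F)
    (hv : v.Monic) (hvirr : Irreducible v) (hd : 0 < v.natDegree)
    (f : Polynomial F) (hf : f ≠ 0) (hfdeg : f.natDegree < v.natDegree) (i m : ℕ) :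
    v ^ ((((Fintype.card F : ℤ) - 1) *
          ∑ j ∈ Finset.Icc 1 (i / v.natDegree),
            ((i : ℤ) - (j : ℤ) * (v.natDegree : ℤ) - 1)).toNat) ∣
      ∑ᶠ n ∈ {n : Polynomial F | n.Monic ∧ n.natDegree = i ∧ v ∣ n - f}, n ^ m := by
  simpa [NN] using (main_dvd v hv hd i).1 m f hfdeg
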